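/- Suppose ℓ = 2 and f is even. Then 3 divides n_B for every subset B of {0,1,…,f−1}; the residue class 0 mod 2^f − 1 is of the form n_B mod 2^f − 1 for exactly 4 subsets B; and each of the (2^f − 4)/3 nonzero residue classes modulo 2^f − 1 that are divisible by 3 is of the form n_B mod 2^f − 1 for exactly 3 subsets B. -/

import Mathlib

namespace Stmt14

/-- `n_B = ∑_{i∈B} 2^{i+1} − ∑_{i∉B} 2^i`. -/
def nB (f : ℕ) (B : Finset (Fin f)) : ℤ :=
  ∑ i ∈ B, (2 : ℤ) ^ ((i : ℕ) + 1) - ∑ i ∈ Bᶜ, (2 : ℤ) ^ (i : ℕ)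

/-- sum of all `2^i` over `Fin f`. -/
lemma sum_univ_pow (f : ℕ) : ∑ i : Fin f, (2:ℤ) ^ (i:ℕ) = 2 ^ f - 1 := by
  rw [Fin.sum_univ_eq_sum_range (fun i => (2:ℤ)^i)]
  have := geom_sum_mul (2:ℤ) f
  linarith

lemma nB_eq (f : ℕ) (B : Finset (Fin f)) :
    nB f B = 3 * (∑ i ∈ B, (2:ℤ) ^ (i:ℕ)) - (2 ^ f - 1) := by
  have hc : ∑ i ∈ Bᶜ, (2:ℤ) ^ (i:ℕ) = (2^f - 1) - ∑ i ∈ B, (2:ℤ) ^ (i:ℕ) := by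
    have := Finset.sum_add_sum_compl B (fun i : Fin f => (2:ℤ) ^ (i:ℕ))
    rw [sum_univ_pow] at this
    linarith
  have hb : ∑ i ∈ B, (2:ℤ) ^ ((i:ℕ) + 1) = 2 * ∑ i ∈ B, (2:ℤ) ^ (i:ℕ) := by
    rw [Finset.mul_sum]; exact Finset.sum_congr rfl fun i _ => by ring
  rw [nB, hb, hc]; ring

/-- injectivity of the binary-sum map. -/
lemma S_inj (f : ℕ) : Function.Injective (fun B : Finset (Fin f) => ∑ i ∈ B, 2 ^ (i:ℕ)) := by
  intro B C h
  have h2 : ∑ i ∈ B.map Fin.valEmbedding, 2 ^ i = ∑ i ∈ C.map Fin.valEmbedding, 2 ^ i := by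
    rwa [Finset.sum_map, Finset.sum_map]
  have := Finset.geomSum_injective (le_refl 2) h2
  exact Finset.map_injective _ this

lemma S_lt (f : ℕ) (B : Finset (Fin f)) : (∑ i ∈ B, 2 ^ (i:ℕ)) < 2 ^ f := by
  have h1 : (∑ i ∈ B, 2 ^ (i:ℕ)) ≤ ∑ i : Fin f, 2 ^ (i:ℕ) :=
    Finset.sum_le_sum_of_subset (Finset.subset_univ B)
  have h2 : ∑ i : Fin f, 2 ^ (i:ℕ) = 2 ^ f - 1 := by
    rw [Fin.sum_univ_eq_sum_range (fun i => 2^i)]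
    exact Nat.geomSum_eq (le_refl 2) f ▸ by omega
  have : (0:ℕ) < 2 ^ f := Nat.pow_pos (n := f) (by norm_num)
  omega

lemma S_surj (f : ℕ) (n : ℕ) (hn : n < 2 ^ f) :
    ∃ B : Finset (Fin f), (∑ i ∈ B, 2 ^ (i:ℕ)) = n := by
  have hlt : ∀ a ∈ n.bitIndices.toFinset, a < f := by
    intro a ha
    rw [List.mem_toFinset] at ha
    have := Nat.two_pow_le_of_mem_bitIndices ha
    have := this.trans_lt hn
    exact (Nat.pow_lt_pow_iff_right (by norm_num)).mp this
  refine ⟨(n.bitIndices.toFinset).attachFin hlt, ?_⟩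
  have hmap : (n.bitIndices.toFinset.attachFin hlt).map Fin.valEmbedding
      = n.bitIndices.toFinset := by
    ext a
    simp only [Finset.mem_map, Finset.mem_attachFin, Fin.valEmbedding_apply]
    constructor
    · rintro ⟨b, hb, rfl⟩; exact hb
    · intro ha; exact ⟨⟨a, hlt a ha⟩, ha, rfl⟩
  have : ∑ i ∈ (n.bitIndices.toFinset).attachFin hlt, 2 ^ (i:ℕ)
      = ∑ i ∈ n.bitIndices.toFinset, 2 ^ i := by
    calc ∑ i ∈ n.bitIndices.toFinset.attachFin hlt, 2 ^ (i:ℕ)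
        = ∑ i ∈ (n.bitIndices.toFinset.attachFin hlt).map Fin.valEmbedding, 2 ^ i := by
          rw [Finset.sum_map]; rfl
      _ = ∑ i ∈ n.bitIndices.toFinset, 2 ^ i := by rw [hmap]
  rw [this, Finset.twoPowSum_toFinset_bitIndices]

lemma mem_iff_aux (N' r s : ℕ) (h0 : 0 < N') (hr : r < N') (hs : s < 3*N'+1) :
    s % N' = r ↔ s = r ∨ s = r + N' ∨ s = r + 2*N' ∨ s = r + 3*N' := by
  constructor
  · intro h1
    have h2 := Nat.div_add_mod s N'
    set q := s / N' with hq
    have hq3 : q ≤ 3 := by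
      by_contra hc
      push_neg at hc
      have : N' * 4 ≤ N' * q := Nat.mul_le_mul_left N' hc
      omega
    interval_cases q <;> omega
  · rintro (rfl|rfl|rfl|rfl) <;>
      simp [Nat.add_mul_mod_self_right, Nat.mod_eq_of_lt hr]

lemma range_filter_card (N' r : ℕ) (h0 : 0 < N') (hr : r < N') :
    ((Finset.range (3*N'+1)).filter (fun s => s % N' = r)).card
      = if r = 0 then 4 else 3 := by
  split_ifs with h
  · subst h
    have he : (Finset.range (3*N'+1)).filter (fun s => s % N' = 0)
        = {0, N', 2*N', 3*N'} := by
      ext s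
      simp only [Finset.mem_filter, Finset.mem_range, Finset.mem_insert,
        Finset.mem_singleton]
      constructor
      · rintro ⟨h1, h2⟩
        have := (mem_iff_aux N' 0 s h0 hr h1).mp h2
        omega
      · rintro (rfl|rfl|rfl|rfl) <;> constructor <;>
          first | omega | simp [Nat.mul_mod_right, Nat.mul_comm]
    rw [he]
    rw [Finset.card_insert_of_notMem (by simp; omega),
      Finset.card_insert_of_notMem (by simp; omega),
      Finset.card_insert_of_notMem (by simp; omega), Finset.card_singleton]
  · have he : (Finset.range (3*N'+1)).filter (fun s => s % N' = r)
        = {r, r + N', r + 2*N'} := by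
      ext s
      simp only [Finset.mem_filter, Finset.mem_range, Finset.mem_insert,
        Finset.mem_singleton]
      constructor
      · rintro ⟨h1, h2⟩
        have := (mem_iff_aux N' r s h0 hr h1).mp h2
        omega
      · rintro (rfl|rfl|rfl)
        · exact ⟨by omega, Nat.mod_eq_of_lt hr⟩
        · refine ⟨by omega, ?_⟩
          rw [Nat.add_mod_right, Nat.mod_eq_of_lt hr]
        · refine ⟨by omega, ?_⟩
          have h2 : r + 2*N' = r + N' + N' := by ring
          rw [h2, Nat.add_mod_right, Nat.add_mod_right, Nat.mod_eq_of_lt hr]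
    rw [he]
    rw [Finset.card_insert_of_notMem (by simp; omega),
      Finset.card_insert_of_notMem (by simp; omega), Finset.card_singleton]

lemma card_count (f N' r : ℕ) (h0 : 0 < N') (hpow : 2^f = 3*N'+1) (hr : r < N') :
    {B : Finset (Fin f) | (∑ i ∈ B, 2 ^ (i:ℕ)) % N' = r}.ncard
      = if r = 0 then 4 else 3 := by
  classical
  rw [Set.ncard_eq_toFinset_card', Set.toFinset_setOf,
    ← range_filter_card N' r h0 hr, ← hpow]
  refine Finset.card_bij (fun B _ => ∑ i ∈ B, 2 ^ (i:ℕ)) ?_ ?_ ?_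
  · intro B hB
    simp only [Finset.mem_filter, Finset.mem_univ, true_and] at hB
    simp only [Finset.mem_filter, Finset.mem_range]
    exact ⟨S_lt f B, hB⟩
  · intro B _ C _ h
    exact S_inj f h
  · intro n hn
    simp only [Finset.mem_filter, Finset.mem_range] at hn
    obtain ⟨B, hB⟩ := S_surj f n hn.1
    refine ⟨B, ?_, hB⟩
    simp only [Finset.mem_filter, Finset.mem_univ, true_and, hB]
    exact hn.2

lemma mem_cond (f N' : ℕ) (h0 : 0 < N') (hN : ((2:ℤ)^f - 1) = 3 * (N':ℤ))
    (m m₁ : ℤ) (hm : m = 3 * m₁) (B : Finset (Fin f)) :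
    Int.ModEq ((2:ℤ)^f - 1) (nB f B) m ↔
      (∑ i ∈ B, 2 ^ (i:ℕ)) % N' = (m₁ % N').toNat := by
  have hSB : nB f B = 3 * ((∑ i ∈ B, 2 ^ (i:ℕ) : ℕ) : ℤ) - 3 * N' := by
    rw [nB_eq, hN]; push_cast; ring
  set S : ℤ := ((∑ i ∈ B, 2 ^ (i:ℕ) : ℕ) : ℤ) with hS
  rw [Int.modEq_iff_dvd, hN, hSB, hm]
  have h1 : (3:ℤ) * m₁ - (3 * S - 3 * N') = 3 * ((N':ℤ) + (m₁ - S)) := by ring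
  rw [h1, mul_dvd_mul_iff_left (by norm_num : (3:ℤ) ≠ 0),
    dvd_add_right (dvd_refl (N':ℤ)), ← Int.modEq_iff_dvd]
  have hN0 : (N':ℤ) ≠ 0 := by exact_mod_cast h0.ne'
  have cast2 : ((m₁ % N').toNat : ℤ) = m₁ % N' :=
    Int.toNat_of_nonneg (Int.emod_nonneg m₁ hN0)
  constructor
  · intro h
    have h2 : S % (N':ℤ) = m₁ % N' := h
    have h3 : (((∑ i ∈ B, 2 ^ (i:ℕ)) % N' : ℕ) : ℤ) = ((m₁ % N').toNat : ℤ) := by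
      rw [cast2, ← h2, hS]; push_cast; rfl
    exact_mod_cast h3
  · intro h
    show S % (N':ℤ) = m₁ % N'
    have h3 : S % (N':ℤ) = (((∑ i ∈ B, 2 ^ (i:ℕ)) % N' : ℕ) : ℤ) := by
      rw [hS]; push_cast; rfl
    rw [h3, h, cast2]

/-- Suppose `ℓ = 2` and `f` is even.  Then `3 ∣ n_B` for every `B`; the class
`0 mod 2^f − 1` arises as `n_B` for exactly `4` subsets `B`; and each nonzero
class modulo `2^f − 1` divisible by `3` arises as `n_B` for exactly `3`
subsets `B`. -/
theorem stmt14 (f : ℕ) (hf : 0 < f) (hfe : Even f) :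
    (∀ B : Finset (Fin f), (3 : ℤ) ∣ nB f B) ∧
    {B : Finset (Fin f) | Int.ModEq ((2 : ℤ) ^ f - 1) (nB f B) 0}.ncard = 4 ∧
    (∀ m : ℤ, ¬ Int.ModEq ((2 : ℤ) ^ f - 1) m 0 → (3 : ℤ) ∣ m →
      {B : Finset (Fin f) |
        Int.ModEq ((2 : ℤ) ^ f - 1) (nB f B) m}.ncard = 3) := by
  obtain ⟨k, hk⟩ := hfe
  have hmod : 2 ^ f % 3 = 1 := by
    have h4 : (2:ℕ) ^ f = 4 ^ k := by
      rw [hk, ← two_mul, pow_mul]; norm_num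
    rw [h4, Nat.pow_mod]
    norm_num
  obtain ⟨N', hN'⟩ : ∃ N', 2 ^ f = 3 * N' + 1 := ⟨2 ^ f / 3, by omega⟩
  have hf2 : 2 ≤ f := by omega
  have h4le : 4 ≤ 2 ^ f := by
    calc (4:ℕ) = 2 ^ 2 := by norm_num
    _ ≤ 2 ^ f := Nat.pow_le_pow_right (by norm_num) hf2
  have h0 : 0 < N' := by omega
  have hN : ((2:ℤ)^f - 1) = 3 * (N':ℤ) := by
    have h2 : ((2:ℕ) ^ f : ℤ) = 3 * (N':ℤ) + 1 := by exact_mod_cast hN'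
    push_cast at h2
    linarith
  refine ⟨?_, ?_, ?_⟩
  · intro B
    exact ⟨(∑ i ∈ B, (2:ℤ) ^ (i:ℕ)) - N', by rw [nB_eq, hN]; ring⟩
  · have hset : {B : Finset (Fin f) | Int.ModEq ((2:ℤ)^f - 1) (nB f B) 0}
        = {B : Finset (Fin f) | (∑ i ∈ B, 2 ^ (i:ℕ)) % N' = 0} := by
      ext B
      have := mem_cond f N' h0 hN 0 0 (by ring) B
      simpa using this
    rw [hset]
    have := card_count f N' 0 h0 hN' h0
    simpa using this
  · intro m hm0 hm3
    obtain ⟨m₁, hm₁⟩ := hm3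
    set r : ℕ := (m₁ % N').toNat with hrdef
    have hN0 : (N':ℤ) ≠ 0 := by exact_mod_cast h0.ne'
    have hge : 0 ≤ m₁ % N' := Int.emod_nonneg m₁ hN0
    have hltZ : m₁ % N' < N' := Int.emod_lt_of_pos m₁ (by exact_mod_cast h0)
    have hr : r < N' := by omega
    have hrne : r ≠ 0 := by
      intro hr0
      have hz : m₁ % (N':ℤ) = 0 := by omega
      obtain ⟨t, ht⟩ := Int.dvd_of_emod_eq_zero hz
      apply hm0
      rw [Int.modEq_iff_dvd, hN]
      exact ⟨-t, by rw [hm₁, ht]; ring⟩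
    have hset : {B : Finset (Fin f) | Int.ModEq ((2:ℤ)^f - 1) (nB f B) m}
        = {B : Finset (Fin f) | (∑ i ∈ B, 2 ^ (i:ℕ)) % N' = r} := by
      ext B
      exact mem_cond f N' h0 hN m m₁ hm₁ B
    rw [hset]
    have := card_count f N' r h0 hN' hr
    rwa [if_neg hrne] at this

end Stmt14
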